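/- Let Ω ⊂ ℝⁿ be an open set of finite measure and p : Ω → [1,∞] measurable. Fix α > 0 and suppose there is C > 1 such that for all sufficiently large λ, |{x ∈ Ω : p(x) ≥ λ}| ≤ C^λ λ^{-λ/α} (ln λ)^{-λ/α}. Then the exponential Orlicz space exp(L^α)(Ω) embeds continuously into L^{p(·)}(Ω). -/

import Mathlib

open MeasureTheory Real Set Filter
open scoped ENNReal

/-- Luxemburg norm of the variable Lebesgue space `L^{p(·)}(Ω)` for an exponent
`p : E → [1,∞]`, with the modular `∫_{Ω∗}(|f|/t)^{p} + t⁻¹‖f‖_{L^∞(Ω_∞)}`. -/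
noncomputable def luxNormE {E : Type*} [MeasureSpace E] (Ω : Set E) (p : E → ℝ≥0∞)
    (f : E → ℝ) : ℝ≥0∞ :=
  ⨅ (t : ℝ) (_ : 0 < t)
    (_ : (∫⁻ x in Ω ∩ {x | p x ≠ ∞}, ENNReal.ofReal ((|f x| / t) ^ (p x).toReal)) +
          essSup (fun x => ENNReal.ofReal (|f x| / t)) (volume.restrict (Ω ∩ {x | p x = ∞}))
          ≤ 1),
    ENNReal.ofReal t

/-- Luxemburg norm of the Orlicz space with Young function `M`. -/
noncomputable def orliczNorm {E : Type*} [MeasureSpace E] (Ω : Set E) (M : ℝ → ℝ) (f : E → ℝ) :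
    ℝ≥0∞ :=
  ⨅ (t : ℝ) (_ : 0 < t)
    (_ : ∫⁻ x in Ω, ENNReal.ofReal (M (|f x| / t)) ≤ 1),
    ENNReal.ofReal t



/-- `v ^ c ≤ exp(c²/α²) * exp(v^α)` for `v, c ≥ 0`. -/
lemma aux_L1 {α : ℝ} (hα : 0 < α) {c v : ℝ} (hc : 0 ≤ c) (hv : 0 ≤ v) :
    v ^ c ≤ Real.exp (c ^ 2 / α ^ 2) * Real.exp (v ^ α) := by
  rcases le_or_gt v 1 with hv1 | hv1
  · have h1 : v ^ c ≤ 1 := Real.rpow_le_one hv hv1 hc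
    have h2 : (1:ℝ) ≤ Real.exp (c ^ 2 / α ^ 2) := Real.one_le_exp (by positivity)
    have h3 : (1:ℝ) ≤ Real.exp (v ^ α) := Real.one_le_exp (by positivity)
    nlinarith
  · have hv0 : 0 < v := lt_trans one_pos hv1
    set s : ℝ := v ^ (α / 2) with hs
    have hs0 : 0 < s := Real.rpow_pos_of_pos hv0 _
    have hlogs : Real.log s = (α / 2) * Real.log v := Real.log_rpow hv0 _
    have hαlogv : α * Real.log v ≤ 2 * s := by
      have h := Real.log_le_sub_one_of_pos hs0
      rw [hlogs] at h
      linarith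
    have hs2 : s * s = v ^ α := by
      have h : (v ^ (α/2)) ^ ((2:ℕ):ℝ) = v ^ α := by
        rw [← Real.rpow_mul hv0.le]; norm_num
      rw [Real.rpow_natCast] at h
      rw [hs, ← h]; ring
    have hdiv : c ^ 2 / α ^ 2 * α ^ 2 = c ^ 2 := by
      field_simp
    have key : Real.log v * c ≤ c ^ 2 / α ^ 2 + v ^ α := by
      nlinarith [sq_nonneg (c - α * s), mul_nonneg hc hα.le, hα, hs0, hdiv, sq_nonneg α,
        mul_pos hα hα,
        mul_le_mul_of_nonneg_left hαlogv (mul_nonneg hc hα.le)]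
    calc v ^ c = Real.exp (Real.log v * c) := Real.rpow_def_of_pos hv0 c
      _ ≤ Real.exp (c ^ 2 / α ^ 2 + v ^ α) := Real.exp_le_exp.2 key
      _ = Real.exp (c ^ 2 / α ^ 2) * Real.exp (v ^ α) := Real.exp_add _ _

/-- Region A∪B pointwise estimate. -/
lemma aux_AB {α lam K q w : ℝ} (hα : 0 < α) (hlam : 1 ≤ lam) (hK : 1 ≤ K)
    (hq1 : 1 ≤ q) (hqlam : q ≤ lam) (hw : 0 ≤ w) :
    (w / K) ^ q ≤ (Real.exp (lam ^ 2 / α ^ 2) / K) * Real.exp (w ^ α) := by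
  have hK0 : 0 < K := lt_of_lt_of_le one_pos hK
  have hu : 0 ≤ w / K := by positivity
  have hmain : w ^ lam ≤ Real.exp (lam ^ 2 / α ^ 2) * Real.exp (w ^ α) :=
    aux_L1 hα (by linarith) hw
  rcases le_or_gt (w / K) 1 with hu1 | hu1
  · rcases eq_or_lt_of_le hu with hu0 | hu0
    · rw [← hu0, Real.zero_rpow (by linarith : q ≠ 0)]
      positivity
    · have h1 : (w / K) ^ q ≤ (w / K) ^ (1:ℝ) :=
        Real.rpow_le_rpow_of_exponent_ge hu0 hu1 hq1
      rw [Real.rpow_one] at h1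
      have h2 : w ≤ Real.exp (lam ^ 2 / α ^ 2) * Real.exp (w ^ α) := by
        have h := aux_L1 hα (zero_le_one) hw
        rw [Real.rpow_one] at h
        have hee : Real.exp ((1:ℝ) ^ 2 / α ^ 2) ≤ Real.exp (lam ^ 2 / α ^ 2) := by
          apply Real.exp_le_exp.2
          apply div_le_div_of_nonneg_right ?_ (by positivity)
          nlinarith
        nlinarith [Real.exp_pos (w ^ α), h, hee,
          mul_le_mul_of_nonneg_right hee (Real.exp_pos (w ^ α)).le]
      calc (w / K) ^ q ≤ w / K := h1
        _ ≤ (Real.exp (lam ^ 2 / α ^ 2) * Real.exp (w ^ α)) / K := by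
            exact div_le_div_of_nonneg_right h2 hK0.le
        _ = (Real.exp (lam ^ 2 / α ^ 2) / K) * Real.exp (w ^ α) := by ring
  · have h1 : (w / K) ^ q ≤ (w / K) ^ lam :=
      Real.rpow_le_rpow_of_exponent_le hu1.le hqlam
    have h2 : (w / K) ^ lam = w ^ lam / K ^ lam := Real.div_rpow hw hK0.le lam
    have h3 : K ^ (1:ℝ) ≤ K ^ lam := Real.rpow_le_rpow_of_exponent_le hK hlam
    rw [Real.rpow_one] at h3
    have h4 : w ^ lam / K ^ lam ≤ w ^ lam / K := by
      apply div_le_div_of_nonneg_left (Real.rpow_nonneg hw _) hK0 h3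
    calc (w / K) ^ q ≤ w ^ lam / K ^ lam := h1.trans_eq h2
      _ ≤ w ^ lam / K := h4
      _ ≤ (Real.exp (lam ^ 2 / α ^ 2) * Real.exp (w ^ α)) / K :=
          div_le_div_of_nonneg_right hmain hK0.le
      _ = (Real.exp (lam ^ 2 / α ^ 2) / K) * Real.exp (w ^ α) := by ring

/-- Region C pointwise estimate. -/
lemma aux_C {α D K q u : ℝ} (hα : 0 < α) (hD1 : 1 ≤ D) (hK1 : 1 ≤ K) (hu : 0 ≤ u)
    (hq0 : 0 < q) (hlogq : 1 ≤ Real.log q) (hq2α : 2 * α ≤ q * Real.log q)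
    (hqD : D ^ α ≤ q * Real.log q)
    (hKα : 1 + D ^ α * (2 + |Real.log α|) / α ≤ K ^ α) :
    u ^ q ≤ (q * Real.log q / D ^ α) ^ (q / α) + (1 / 4) * Real.exp ((K * u) ^ α) := by
  have hDα0 : (0:ℝ) < D ^ α := Real.rpow_pos_of_pos (by linarith) _
  set W : ℝ := q * Real.log q / D ^ α with hW
  have hW1 : 1 ≤ W := (one_le_div hDα0).2 hqD
  rcases le_or_gt (u ^ α) W with hcase | hcase
  · -- small u: u ≤ W^(1/α), so u^q ≤ W^(q/α)
    have h1 : u ≤ W ^ (α⁻¹) := by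
      have := Real.rpow_le_rpow (Real.rpow_nonneg hu α) hcase (le_of_lt (inv_pos.2 hα))
      rwa [← Real.rpow_mul hu, mul_inv_cancel₀ hα.ne', Real.rpow_one] at this
    have h2 : u ^ q ≤ (W ^ (α⁻¹)) ^ q := Real.rpow_le_rpow hu h1 hq0.le
    have h3 : (W ^ (α⁻¹)) ^ q = W ^ (q / α) := by
      rw [← Real.rpow_mul (by linarith : (0:ℝ) ≤ W)]
      congr 1; field_simp
    have h4 : (0:ℝ) ≤ (1/4) * Real.exp ((K * u) ^ α) := by positivity
    calc u ^ q ≤ W ^ (q / α) := h2.trans_eq h3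
      _ ≤ _ := le_add_of_nonneg_right h4
  · -- large u
    have hu1 : 1 < u := by
      by_contra h
      push_neg at h
      exact absurd (Real.rpow_le_one hu h hα.le) (by linarith)
    have hu0 : 0 < u := lt_trans one_pos hu1
    set w : ℝ := u ^ α with hw
    have hw1 : 1 < w := lt_of_le_of_lt hW1 hcase
    have hlogu : q * Real.log u = (q / α) * Real.log w := by
      rw [hw, Real.log_rpow hu0]; field_simp
    have hlogw : Real.log w ≤ α * w / q + Real.log (q / α) := by
      have h1 : Real.log (α * w / q) ≤ α * w / q := by
        have := Real.log_le_sub_one_of_pos (by positivity : (0:ℝ) < α * w / q)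
        linarith
      have h2 : Real.log (α * w / q) = Real.log w - Real.log (q / α) := by
        rw [show α * w / q = w / (q / α) by field_simp,
          Real.log_div (by positivity : w ≠ 0) (by positivity : q / α ≠ 0)]
      linarith
    have hlogqα : Real.log (q / α) ≤ Real.log q * (1 + |Real.log α|) := by
      have h1 : Real.log (q / α) = Real.log q - Real.log α :=
        Real.log_div hq0.ne' hα.ne'
      have h2 : -Real.log α ≤ |Real.log α| := neg_le_abs _
      nlinarith [abs_nonneg (Real.log α)]
    have hlog4 : Real.log 4 ≤ 2 := by
      rw [show (4:ℝ) = 2 * 2 by norm_num, Real.log_mul (by norm_num) (by norm_num)]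
      nlinarith [Real.log_two_lt_d9]
    have h2qlogq : 2 ≤ (q / α) * Real.log q := by
      rw [div_mul_eq_mul_div, le_div_iff₀ hα]
      linarith
    have hWw : W ≤ w := hcase.le
    have hcoef : (0:ℝ) ≤ D ^ α * (2 + |Real.log α|) / α := by positivity
    have hkey : Real.log u * q + Real.log 4 ≤ K ^ α * w := by
      have e1 : q * Real.log u ≤ w + (q / α) * Real.log (q / α) := by
        rw [hlogu]
        have := mul_le_mul_of_nonneg_left hlogw (by positivity : (0:ℝ) ≤ q / α)
        calc (q / α) * Real.log w ≤ (q / α) * (α * w / q + Real.log (q / α)) := this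
          _ = w + (q / α) * Real.log (q / α) := by field_simp
      have e2 : (q / α) * Real.log (q / α) ≤ (q / α) * (Real.log q * (1 + |Real.log α|)) :=
        mul_le_mul_of_nonneg_left hlogqα (by positivity)
      have e3 : (q / α) * (Real.log q * (1 + |Real.log α|)) + (q / α) * Real.log q
          = (q * Real.log q / α) * (2 + |Real.log α|) := by ring
      have e4 : (q * Real.log q / α) * (2 + |Real.log α|) = W * (D ^ α * (2 + |Real.log α|) / α) := by
        rw [hW]; field_simp
      have e5 : W * (D ^ α * (2 + |Real.log α|) / α) ≤ w * (D ^ α * (2 + |Real.log α|) / α) :=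
        mul_le_mul_of_nonneg_right hWw hcoef
      have e6 : w * (D ^ α * (2 + |Real.log α|) / α) ≤ w * (K ^ α - 1) := by
        apply mul_le_mul_of_nonneg_left (by linarith) (by linarith : (0:ℝ) ≤ w)
      nlinarith [e1, e2, e5, e6, hlog4, h2qlogq, hw1]
    have hexp : u ^ q = Real.exp (Real.log u * q) := Real.rpow_def_of_pos hu0 q
    have hKu : (K * u) ^ α = K ^ α * w := by
      rw [hw, Real.mul_rpow (by linarith : (0:ℝ) ≤ K) hu]
    have : u ^ q ≤ (1/4) * Real.exp ((K * u) ^ α) := by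
      rw [hexp, hKu]
      have h5 : Real.exp (Real.log u * q) ≤ Real.exp (K ^ α * w - Real.log 4) :=
        Real.exp_le_exp.2 (by linarith)
      have h6 : Real.exp (K ^ α * w - Real.log 4) = Real.exp (K ^ α * w) / 4 := by
        rw [Real.exp_sub, Real.exp_log (by norm_num : (0:ℝ) < 4)]
      calc Real.exp (Real.log u * q) ≤ Real.exp (K ^ α * w) / 4 := h5.trans_eq h6
        _ = (1/4) * Real.exp (K ^ α * w) := by ring
    have hpos : (0:ℝ) ≤ (q * Real.log q / D ^ α) ^ (q / α) := Real.rpow_nonneg (by positivity) _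
    linarith

/-- Series term bound. -/
lemma aux_T {α C : ℝ} (hα : 0 < α) (hC : 1 ≤ C) {k : ℝ}
    (hk3 : 3 ≤ k) (hlogk : 1 ≤ Real.log k) (hk16 : (16 / (α * Real.log 2)) ^ 2 ≤ k) :
    ((k + 2) * Real.log (k + 2) / ((4:ℝ) ^ (α⁻¹) * (2 * C)) ^ α) ^ ((k + 2) / α) *
      (C ^ k * k ^ (-(k / α)) * Real.log k ^ (-(k / α))) ≤ (2:ℝ) ^ (-(k / 2) - 2) := by
  have hk0 : (0:ℝ) < k := by linarith
  have hlogk0 : (0:ℝ) < Real.log k := by linarith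
  have h2C : (0:ℝ) < 2 * C := by linarith
  set P : ℝ := k * Real.log k with hP
  have hP0 : (0:ℝ) < P := mul_pos hk0 hlogk0
  have hDα : ((4:ℝ) ^ (α⁻¹) * (2 * C)) ^ α = 4 * (2 * C) ^ α := by
    rw [Real.mul_rpow (by positivity) h2C.le, Real.rpow_inv_rpow (by norm_num) hα.ne']
  have hL4P : (k + 2) * Real.log (k + 2) ≤ 4 * P := by
    have h1 : k + 2 ≤ 2 * k := by linarith
    have h2 : Real.log (k + 2) ≤ 2 * Real.log k := by
      calc Real.log (k + 2) ≤ Real.log (2 * k) :=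
            Real.log_le_log (by linarith) h1
        _ = Real.log 2 + Real.log k := Real.log_mul (by norm_num) hk0.ne'
        _ ≤ 2 * Real.log k := by nlinarith [Real.log_two_lt_d9]
    have h3 : (0:ℝ) ≤ Real.log (k + 2) := Real.log_nonneg (by linarith)
    calc (k + 2) * Real.log (k + 2) ≤ (2 * k) * (2 * Real.log k) := by
          apply mul_le_mul h1 h2 h3 (by linarith)
      _ = 4 * P := by rw [hP]; ring
  have hstep1 : (k + 2) * Real.log (k + 2) / ((4:ℝ) ^ (α⁻¹) * (2 * C)) ^ α
      ≤ P / (2 * C) ^ α := by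
    rw [hDα]
    rw [div_le_div_iff₀ (by positivity) (by positivity)]
    calc (k + 2) * Real.log (k + 2) * (2 * C) ^ α ≤ 4 * P * (2 * C) ^ α := by
          apply mul_le_mul_of_nonneg_right hL4P (by positivity)
      _ = P * (4 * (2 * C) ^ α) := by ring
  have he1 : (0:ℝ) ≤ (k + 2) / α := by positivity
  have hA : ((k + 2) * Real.log (k + 2) / ((4:ℝ) ^ (α⁻¹) * (2 * C)) ^ α) ^ ((k + 2) / α)
      ≤ P ^ ((k + 2) / α) / (2 * C) ^ (k + 2) := by
    have hlogk2 : (0:ℝ) ≤ Real.log (k + 2) := Real.log_nonneg (by linarith)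
    have h1 := Real.rpow_le_rpow
      (div_nonneg (mul_nonneg (by linarith) hlogk2) (by positivity)) hstep1 he1
    have h2 : (P / (2 * C) ^ α) ^ ((k + 2) / α)
        = P ^ ((k + 2) / α) / ((2 * C) ^ α) ^ ((k + 2) / α) :=
      Real.div_rpow hP0.le (by positivity) _
    have h3 : ((2 * C) ^ α) ^ ((k + 2) / α) = (2 * C) ^ (k + 2) := by
      rw [← Real.rpow_mul h2C.le]
      congr 1
      field_simp
    rw [h2, h3] at h1
    exact h1
  have hB : C ^ k * k ^ (-(k / α)) * Real.log k ^ (-(k / α)) = C ^ k * P ^ (-(k / α)) := by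
    rw [hP, Real.mul_rpow hk0.le hlogk0.le]; ring
  have hPP : P ^ ((k + 2) / α) * P ^ (-(k / α)) = P ^ (2 / α) := by
    rw [← Real.rpow_add hP0]
    congr 1
    field_simp
    ring
  have h2Ck : (2 * C) ^ (k + 2) = 2 ^ (k + 2) * C ^ (k + 2) :=
    Real.mul_rpow (by norm_num) (by linarith)
  have hCk : C ^ k ≤ C ^ (k + 2) := Real.rpow_le_rpow_of_exponent_le hC (by linarith)
  have hP2α : P ^ (2 / α) ≤ k ^ (4 / α) := by
    have h1 : P ≤ k * k := by
      have := Real.log_le_sub_one_of_pos hk0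
      rw [hP]
      nlinarith
    have h2 : P ^ (2 / α) ≤ (k * k) ^ (2 / α) :=
      Real.rpow_le_rpow hP0.le h1 (by positivity)
    have h3 : (k * k) ^ (2 / α) = k ^ (4 / α) := by
      rw [Real.mul_rpow hk0.le hk0.le, ← Real.rpow_add hk0]
      congr 1
      ring
    rw [h3] at h2
    exact h2
  have hk4α : k ^ (4 / α) ≤ (2:ℝ) ^ (k / 2) := by
    have hlog2 : (0:ℝ) < Real.log 2 := Real.log_pos (by norm_num)
    have hsq : Real.sqrt k * Real.sqrt k = k := Real.mul_self_sqrt hk0.le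
    have hsqk : 16 / (α * Real.log 2) ≤ Real.sqrt k := by
      have h1 : Real.sqrt ((16 / (α * Real.log 2)) ^ 2) ≤ Real.sqrt k :=
        Real.sqrt_le_sqrt hk16
      rwa [Real.sqrt_sq (by positivity)] at h1
    have hlogsqrt : Real.log k ≤ 2 * Real.sqrt k := by
      have h1 : Real.log (Real.sqrt k) ≤ Real.sqrt k - 1 :=
        Real.log_le_sub_one_of_pos (Real.sqrt_pos.2 hk0)
      have h2 : Real.log (Real.sqrt k) = Real.log k / 2 := Real.log_sqrt hk0.le
      linarith
    have hsqk' : (16:ℝ) ≤ Real.sqrt k * (α * Real.log 2) :=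
      (div_le_iff₀ (by positivity)).1 hsqk
    have h5 : 8 * Real.log k ≤ α * Real.log 2 * k := by
      nlinarith [mul_le_mul_of_nonneg_right hsqk' (Real.sqrt_nonneg k), hsq, hlogsqrt,
        Real.sqrt_nonneg k]
    have hmain : Real.log k * (4 / α) ≤ Real.log 2 * (k / 2) := by
      have h6 : 8 * Real.log k / (2 * α) ≤ α * Real.log 2 * k / (2 * α) :=
        div_le_div_of_nonneg_right h5 (by positivity)
      have e7 : 8 * Real.log k / (2 * α) = Real.log k * (4 / α) := by
        field_simp; ring
      have e8 : α * Real.log 2 * k / (2 * α) = Real.log 2 * (k / 2) := by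
        field_simp
      rw [e7, e8] at h6
      exact h6
    calc k ^ (4 / α) = Real.exp (Real.log k * (4 / α)) := Real.rpow_def_of_pos hk0 _
      _ ≤ Real.exp (Real.log 2 * (k / 2)) := Real.exp_le_exp.2 hmain
      _ = (2:ℝ) ^ (k / 2) := (Real.rpow_def_of_pos (by norm_num) _).symm
  -- assemble
  have hfinal : P ^ ((k + 2) / α) / (2 * C) ^ (k + 2) * (C ^ k * P ^ (-(k / α)))
      ≤ (2:ℝ) ^ (-(k / 2) - 2) := by
    have hexp : P ^ ((k + 2) / α) / (2 * C) ^ (k + 2) * (C ^ k * P ^ (-(k / α)))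
        = P ^ (2 / α) * (C ^ k / C ^ (k + 2)) / 2 ^ (k + 2) := by
      rw [h2Ck, ← hPP]
      field_simp
    rw [hexp]
    have hCC : C ^ k / C ^ (k + 2) ≤ 1 :=
      div_le_one_of_le₀ hCk (by positivity)
    have h1 : P ^ (2 / α) * (C ^ k / C ^ (k + 2)) ≤ (2:ℝ) ^ (k / 2) := by
      calc P ^ (2 / α) * (C ^ k / C ^ (k + 2)) ≤ P ^ (2 / α) * 1 :=
            mul_le_mul_of_nonneg_left hCC (Real.rpow_nonneg hP0.le _)
        _ = P ^ (2 / α) := by ring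
        _ ≤ k ^ (4 / α) := hP2α
        _ ≤ (2:ℝ) ^ (k / 2) := hk4α
    calc P ^ (2 / α) * (C ^ k / C ^ (k + 2)) / 2 ^ (k + 2)
        ≤ (2:ℝ) ^ (k / 2) / 2 ^ (k + 2) :=
          div_le_div_of_nonneg_right h1 (by positivity : (0:ℝ) ≤ (2:ℝ) ^ (k + 2))
      _ = (2:ℝ) ^ (-(k / 2) - 2) := by
          rw [← Real.rpow_sub (by norm_num : (0:ℝ) < 2)]
          congr 1
          ring
  calc ((k + 2) * Real.log (k + 2) / ((4:ℝ) ^ (α⁻¹) * (2 * C)) ^ α) ^ ((k + 2) / α) *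
        (C ^ k * k ^ (-(k / α)) * Real.log k ^ (-(k / α)))
      = ((k + 2) * Real.log (k + 2) / ((4:ℝ) ^ (α⁻¹) * (2 * C)) ^ α) ^ ((k + 2) / α) *
        (C ^ k * P ^ (-(k / α))) := by rw [hB]
    _ ≤ P ^ ((k + 2) / α) / (2 * C) ^ (k + 2) * (C ^ k * P ^ (-(k / α))) := by
        apply mul_le_mul_of_nonneg_right hA (by positivity)
    _ ≤ (2:ℝ) ^ (-(k / 2) - 2) := hfinal

/-- Decay bound used to show `{p = ∞}` is null. -/
lemma aux_null {α C m : ℝ} (hα : 0 < α) (hC : 1 ≤ C) (hm0 : 0 < m)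
    (hlog : 1 ≤ Real.log m) (hD : ((4:ℝ) ^ (α⁻¹) * (2 * C)) ^ α ≤ m * Real.log m) :
    C ^ m * m ^ (-(m / α)) * Real.log m ^ (-(m / α)) ≤ (2:ℝ) ^ (-m) := by
  have hlog0 : (0:ℝ) < Real.log m := by linarith
  have h2C : (0:ℝ) < 2 * C := by linarith
  have hP0 : (0:ℝ) < m * Real.log m := mul_pos hm0 hlog0
  have hDα : ((4:ℝ) ^ (α⁻¹) * (2 * C)) ^ α = 4 * (2 * C) ^ α := by
    rw [Real.mul_rpow (by positivity) h2C.le, Real.rpow_inv_rpow (by norm_num) hα.ne']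
  have h2Cα : (2 * C) ^ α ≤ m * Real.log m := by
    have h4 : (2 * C) ^ α ≤ 4 * (2 * C) ^ α := by nlinarith [Real.rpow_pos_of_pos h2C α]
    linarith [hDα ▸ hD]
  have hmono : ((2 * C) ^ α) ^ (m / α) ≤ (m * Real.log m) ^ (m / α) :=
    Real.rpow_le_rpow (by positivity) h2Cα (by positivity)
  have h2Cm : ((2 * C) ^ α) ^ (m / α) = (2 * C) ^ m := by
    rw [← Real.rpow_mul h2C.le]
    congr 1
    field_simp
  have hmul : m ^ (-(m / α)) * Real.log m ^ (-(m / α)) = (m * Real.log m) ^ (-(m / α)) :=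
    (Real.mul_rpow hm0.le hlog0.le).symm
  have hinv : (m * Real.log m) ^ (-(m / α)) ≤ ((2 * C) ^ m)⁻¹ := by
    rw [Real.rpow_neg hP0.le]
    rw [← h2Cm]
    exact inv_anti₀ (by positivity) hmono
  have h2Cmm : (2 * C) ^ m = 2 ^ m * C ^ m := Real.mul_rpow (by norm_num) (by linarith)
  have hCm0 : (0:ℝ) < C ^ m := Real.rpow_pos_of_pos (by linarith) m
  calc C ^ m * m ^ (-(m / α)) * Real.log m ^ (-(m / α))
      = C ^ m * (m ^ (-(m / α)) * Real.log m ^ (-(m / α))) := by ring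
    _ = C ^ m * (m * Real.log m) ^ (-(m / α)) := by rw [hmul]
    _ ≤ C ^ m * ((2 * C) ^ m)⁻¹ := by
        apply mul_le_mul_of_nonneg_left hinv hCm0.le
    _ = C ^ m * (2 ^ m * C ^ m)⁻¹ := by rw [h2Cmm]
    _ = (2 ^ m)⁻¹ := by
        rw [mul_inv]
        field_simp
    _ = (2:ℝ) ^ (-m) := by rw [Real.rpow_neg (by norm_num)]


set_option maxHeartbeats 3000000 in
theorem stmt_1 (n : ℕ) (Ω : Set (Fin n → ℝ)) (hΩopen : IsOpen Ω) (hΩfin : volume Ω < ∞)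
    (p : (Fin n → ℝ) → ℝ≥0∞) (hpmeas : Measurable p) (hp1 : ∀ x ∈ Ω, 1 ≤ p x)
    (α C : ℝ) (hα : 0 < α) (hC : 1 < C)
    (hdist : ∃ lam0 : ℝ, ∀ l ≥ lam0,
      volume {x ∈ Ω | ENNReal.ofReal l ≤ p x} ≤
        ENNReal.ofReal (C ^ l * l ^ (-(l/α)) * Real.log l ^ (-(l/α)))) :
    ∃ K > (0:ℝ), ∀ f : (Fin n → ℝ) → ℝ, Measurable f →
      luxNormE Ω p f ≤
        ENNReal.ofReal K * orliczNorm Ω (fun t => Real.exp (t ^ α)) f := by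
  obtain ⟨lam0, hlam0⟩ := hdist
  have hC1 : (1:ℝ) ≤ C := hC.le
  set D : ℝ := (4:ℝ) ^ (α⁻¹) * (2 * C) with hD
  have hD1 : 1 ≤ D := by
    have h4 : (1:ℝ) ≤ (4:ℝ) ^ (α⁻¹) := Real.one_le_rpow (by norm_num) (by positivity)
    nlinarith
  set R : ℝ := max (max (lam0 + 1) (Real.exp 2))
      (max ((16 / (α * Real.log 2)) ^ 2) (max (D ^ α) (2 * α + 3))) with hR
  set k0 : ℕ := ⌈R⌉₊ with hk0
  have hk0R : R ≤ (k0:ℝ) := Nat.le_ceil R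
  have hfacts : ∀ l : ℝ, (k0:ℝ) ≤ l →
      lam0 ≤ l ∧ 1 ≤ Real.log l ∧ 2 * α ≤ l * Real.log l ∧ D ^ α ≤ l * Real.log l ∧
      (16 / (α * Real.log 2)) ^ 2 ≤ l ∧ 3 ≤ l := by
    intro l hl
    have hRl : R ≤ l := hk0R.trans hl
    have e1 : lam0 + 1 ≤ l := le_trans (le_trans (le_max_left _ _) (le_max_left _ _)) hRl
    have e2 : Real.exp 2 ≤ l := le_trans (le_trans (le_max_right _ _) (le_max_left _ _)) hRl
    have e3 : (16 / (α * Real.log 2)) ^ 2 ≤ l :=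
      le_trans (le_trans (le_max_left _ _) (le_max_right _ _)) hRl
    have e4 : D ^ α ≤ l := le_trans (le_trans (le_trans (le_max_left _ _) (le_max_right _ _)) (le_max_right _ _)) hRl
    have e5 : 2 * α + 3 ≤ l := le_trans (le_trans (le_trans (le_max_right _ _) (le_max_right _ _)) (le_max_right _ _)) hRl
    have hl0 : (0:ℝ) < l := lt_of_lt_of_le (Real.exp_pos 2) e2
    have hlog : 1 ≤ Real.log l := by
      have := Real.log_le_log (Real.exp_pos 2) e2
      rw [Real.log_exp] at this
      linarith
    refine ⟨by linarith, hlog, ?_, ?_, e3, by linarith⟩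
    · nlinarith
    · nlinarith [Real.rpow_pos_of_pos (by linarith : (0:ℝ) < D) α]
  have hk03 : (3:ℝ) ≤ (k0:ℝ) := (hfacts _ le_rfl).2.2.2.2.2
  have hk01 : (1:ℝ) ≤ (k0:ℝ) := by linarith
  set K : ℝ := max (max 1 (2 * Real.exp ((k0:ℝ) ^ 2 / α ^ 2)))
      ((1 + D ^ α * (2 + |Real.log α|) / α) ^ (α⁻¹)) with hK
  have hK1 : (1:ℝ) ≤ K := le_trans (le_max_left _ _) (le_max_left _ _)
  have hK0 : (0:ℝ) < K := lt_of_lt_of_le one_pos hK1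
  have hKexp : 2 * Real.exp ((k0:ℝ) ^ 2 / α ^ 2) ≤ K :=
    le_trans (le_max_right _ _) (le_max_left _ _)
  have hKα : 1 + D ^ α * (2 + |Real.log α|) / α ≤ K ^ α := by
    have hb0 : (0:ℝ) ≤ 1 + D ^ α * (2 + |Real.log α|) / α := by positivity
    have h1 : (1 + D ^ α * (2 + |Real.log α|) / α) ^ (α⁻¹) ≤ K := le_max_right _ _
    calc 1 + D ^ α * (2 + |Real.log α|) / α
        = ((1 + D ^ α * (2 + |Real.log α|) / α) ^ (α⁻¹)) ^ α :=
          (Real.rpow_inv_rpow hb0 hα.ne').symm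
      _ ≤ K ^ α := Real.rpow_le_rpow (by positivity) h1 hα.le
  refine ⟨K, hK0, ?_⟩
  intro f hf
  -- the set where p is infinite is null
  have hnull : volume (Ω ∩ {x | p x = ∞}) = 0 := by
    have hbound : ∀ m : ℕ, k0 ≤ m →
        volume (Ω ∩ {x | p x = ∞}) ≤ ENNReal.ofReal ((2:ℝ) ^ (-(m:ℝ))) := by
      intro m hm
      have hml : (k0:ℝ) ≤ (m:ℝ) := by exact_mod_cast hm
      obtain ⟨e1, e2, e3, e4, e5, e6⟩ := hfacts (m:ℝ) hml
      have hsub : Ω ∩ {x | p x = ∞} ⊆ {x ∈ Ω | ENNReal.ofReal (m:ℝ) ≤ p x} := by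
        rintro x ⟨hxΩ, hx⟩
        refine ⟨hxΩ, ?_⟩
        simp only [Set.mem_setOf_eq] at hx
        simp [hx]
      refine (measure_mono hsub).trans ((hlam0 (m:ℝ) e1).trans ?_)
      exact ENNReal.ofReal_le_ofReal (aux_null hα hC1 (by linarith) e2 e4)
    have htend : Filter.Tendsto (fun m : ℕ => ENNReal.ofReal ((2:ℝ) ^ (-(m:ℝ))))
        Filter.atTop (nhds 0) := by
      have heq : (fun m : ℕ => ENNReal.ofReal ((2:ℝ) ^ (-(m:ℝ))))
          = fun m : ℕ => ENNReal.ofReal ((1/2:ℝ) ^ m) := by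
        funext m
        congr 1
        rw [Real.rpow_neg (by norm_num), Real.rpow_natCast]
        simp [inv_pow]
      rw [heq]
      have h2 : Filter.Tendsto (fun m : ℕ => ((1/2:ℝ)) ^ m) Filter.atTop (nhds 0) :=
        tendsto_pow_atTop_nhds_zero_of_lt_one (by norm_num) (by norm_num)
      have := (ENNReal.continuous_ofReal.tendsto 0).comp h2
      simpa [Function.comp_def] using this
    have hle : volume (Ω ∩ {x | p x = ∞}) ≤ 0 := by
      refine ge_of_tendsto htend ?_
      filter_upwards [Filter.eventually_atTop.2 ⟨k0, fun m hm => hbound m hm⟩] with m hm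
      exact hm
    exact le_antisymm hle zero_le
  -- main estimate
  have key : ∀ t : ℝ, 0 < t →
      (∫⁻ x in Ω, ENNReal.ofReal (Real.exp ((|f x| / t) ^ α))) ≤ 1 →
      luxNormE Ω p f ≤ ENNReal.ofReal K * ENNReal.ofReal t := by
    intro t ht hcond
    have hΩm : MeasurableSet Ω := hΩopen.measurableSet
    have hpinfm : MeasurableSet {x | p x ≠ ∞} :=
      (hpmeas (measurableSet_singleton ∞)).compl
    have hΩ'm : MeasurableSet (Ω ∩ {x | p x ≠ ∞}) := hΩm.inter hpinfm
    have hΩ'sub : Ω ∩ {x | p x ≠ ∞} ⊆ Ω := Set.inter_subset_left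
    have hqmeas : Measurable fun x => (p x).toReal := hpmeas.ennreal_toReal
    have hEmeas : Measurable fun x => ENNReal.ofReal (Real.exp ((|f x| / t) ^ α)) :=
      (Real.measurable_exp.comp ((hf.abs.div_const t).pow measurable_const)).ennreal_ofReal
    have hGmeas : Measurable fun x => ENNReal.ofReal ((|f x| / (K * t)) ^ (p x).toReal) :=
      (((hf.abs.div_const (K * t)).pow hqmeas)).ennreal_ofReal
    have hgqmeas : Measurable fun x => ENNReal.ofReal
        (((p x).toReal * Real.log (p x).toReal / D ^ α) ^ ((p x).toReal / α)) :=
      (((hqmeas.mul (Real.measurable_log.comp hqmeas)).div_const _).pow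
        (hqmeas.div_const _)).ennreal_ofReal
    have hexpint : ∀ s : Set (Fin n → ℝ), s ⊆ Ω →
        (∫⁻ x in s, ENNReal.ofReal (Real.exp ((|f x| / t) ^ α))) ≤ 1 := fun s hs =>
      (lintegral_mono_set hs).trans hcond
    have hrwK : ∀ x : Fin n → ℝ, |f x| / (K * t) = (|f x| / t) / K := by
      intro x
      rw [div_div, mul_comm t K]
    -- part 1 : small p
    have hb1 : (∫⁻ x in {x | p x < ENNReal.ofReal ((k0:ℝ))} ∩ (Ω ∩ {x | p x ≠ ∞}),
        ENNReal.ofReal ((|f x| / (K * t)) ^ (p x).toReal)) ≤ ENNReal.ofReal (1/2) := by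
      have hpt : ∀ x ∈ {x | p x < ENNReal.ofReal ((k0:ℝ))} ∩ (Ω ∩ {x | p x ≠ ∞}),
          ENNReal.ofReal ((|f x| / (K * t)) ^ (p x).toReal)
          ≤ ENNReal.ofReal (Real.exp ((k0:ℝ) ^ 2 / α ^ 2) / K) *
            ENNReal.ofReal (Real.exp ((|f x| / t) ^ α)) := by
        intro x hx
        rw [← ENNReal.ofReal_mul (by positivity)]
        apply ENNReal.ofReal_le_ofReal
        have hq1 : 1 ≤ (p x).toReal := by
          have h := ENNReal.toReal_mono hx.2.2 (hp1 x hx.2.1)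
          simpa using h
        have hqk : (p x).toReal ≤ (k0:ℝ) := (ENNReal.toReal_lt_of_lt_ofReal hx.1).le
        rw [hrwK x]
        exact aux_AB hα hk01 hK1 hq1 hqk (by positivity)
      calc (∫⁻ x in {x | p x < ENNReal.ofReal ((k0:ℝ))} ∩ (Ω ∩ {x | p x ≠ ∞}),
            ENNReal.ofReal ((|f x| / (K * t)) ^ (p x).toReal))
          ≤ ∫⁻ x in {x | p x < ENNReal.ofReal ((k0:ℝ))} ∩ (Ω ∩ {x | p x ≠ ∞}),
            ENNReal.ofReal (Real.exp ((k0:ℝ) ^ 2 / α ^ 2) / K) *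
              ENNReal.ofReal (Real.exp ((|f x| / t) ^ α)) :=
            setLIntegral_mono (measurable_const.mul hEmeas) hpt
        _ = ENNReal.ofReal (Real.exp ((k0:ℝ) ^ 2 / α ^ 2) / K) *
            ∫⁻ x in {x | p x < ENNReal.ofReal ((k0:ℝ))} ∩ (Ω ∩ {x | p x ≠ ∞}),
              ENNReal.ofReal (Real.exp ((|f x| / t) ^ α)) :=
            lintegral_const_mul _ hEmeas
        _ ≤ ENNReal.ofReal (Real.exp ((k0:ℝ) ^ 2 / α ^ 2) / K) * 1 :=
            mul_le_mul_right (hexpint _ (Set.inter_subset_right.trans hΩ'sub)) _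
        _ ≤ ENNReal.ofReal (1/2) := by
            rw [mul_one]
            apply ENNReal.ofReal_le_ofReal
            rw [div_le_iff₀ hK0]
            nlinarith [hKexp, Real.exp_pos ((k0:ℝ) ^ 2 / α ^ 2)]
    -- part 2 : large p, pointwise bound
    have hb2a : ∀ x ∈ {x | p x < ENNReal.ofReal ((k0:ℝ))}ᶜ ∩ (Ω ∩ {x | p x ≠ ∞}),
        ENNReal.ofReal ((|f x| / (K * t)) ^ (p x).toReal)
        ≤ ENNReal.ofReal (((p x).toReal * Real.log (p x).toReal / D ^ α) ^ ((p x).toReal / α))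
          + ENNReal.ofReal (1/4) * ENNReal.ofReal (Real.exp ((|f x| / t) ^ α)) := by
      intro x hx
      have hxB : ENNReal.ofReal ((k0:ℝ)) ≤ p x := not_lt.1 hx.1
      have hxfin : p x ≠ ∞ := hx.2.2
      have hqk : (k0:ℝ) ≤ (p x).toReal := (ENNReal.ofReal_le_iff_le_toReal hxfin).1 hxB
      obtain ⟨e1, e2, e3, e4, e5, e6⟩ := hfacts _ hqk
      have hq0 : 0 < (p x).toReal := by linarith
      have hD0 : (0:ℝ) < D ^ α := Real.rpow_pos_of_pos (by linarith) α
      have hbase0 : (0:ℝ) ≤ (p x).toReal * Real.log (p x).toReal / D ^ α := by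
        apply div_nonneg (by nlinarith) hD0.le
      have hle := aux_C (α := α) (D := D) (K := K) (q := (p x).toReal) (u := (|f x| / t) / K)
        hα hD1 hK1 (by positivity) hq0 e2 e3 e4 hKα
      have hKu : K * ((|f x| / t) / K) = |f x| / t := by field_simp
      rw [hKu] at hle
      rw [hrwK x]
      calc ENNReal.ofReal (((|f x| / t) / K) ^ (p x).toReal)
          ≤ ENNReal.ofReal (((p x).toReal * Real.log (p x).toReal / D ^ α) ^ ((p x).toReal / α)
              + 1 / 4 * Real.exp ((|f x| / t) ^ α)) := ENNReal.ofReal_le_ofReal hle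
        _ = _ := by
            rw [ENNReal.ofReal_add (Real.rpow_nonneg hbase0 _) (by positivity),
              ENNReal.ofReal_mul (by norm_num : (0:ℝ) ≤ 1/4)]
    -- the series covering
    set S : ℕ → Set (Fin n → ℝ) := fun j => (Ω ∩ {x | p x ≠ ∞}) ∩
      {x | (k0:ℝ) + 2*(j:ℝ) ≤ (p x).toReal ∧ (p x).toReal < (k0:ℝ) + 2*(j:ℝ) + 2} with hS
    have hcover : {x | p x < ENNReal.ofReal ((k0:ℝ))}ᶜ ∩ (Ω ∩ {x | p x ≠ ∞}) ⊆ ⋃ j : ℕ, S j := by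
      rintro x ⟨hxB, hxΩ'⟩
      have hxfin : p x ≠ ∞ := hxΩ'.2
      have hqk : (k0:ℝ) ≤ (p x).toReal :=
        (ENNReal.ofReal_le_iff_le_toReal hxfin).1 (not_lt.1 hxB)
      have hq0 : (0:ℝ) ≤ (p x).toReal := le_trans (by positivity) hqk
      have hm1 : ((⌊(p x).toReal⌋₊ : ℕ):ℝ) ≤ (p x).toReal := Nat.floor_le hq0
      have hm2 : (p x).toReal < (⌊(p x).toReal⌋₊ : ℕ) + 1 := Nat.lt_floor_add_one _
      have hk0m : k0 ≤ ⌊(p x).toReal⌋₊ := Nat.le_floor (by exact_mod_cast hqk)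
      refine Set.mem_iUnion.2 ⟨(⌊(p x).toReal⌋₊ - k0)/2, hxΩ', ?_, ?_⟩
      · have h1 : k0 + 2*((⌊(p x).toReal⌋₊ - k0)/2) ≤ ⌊(p x).toReal⌋₊ := by omega
        have h2 : ((k0 + 2*((⌊(p x).toReal⌋₊ - k0)/2) : ℕ):ℝ) ≤ ((⌊(p x).toReal⌋₊ : ℕ):ℝ) := by
          exact_mod_cast h1
        push_cast at h2
        linarith
      · have h1 : ⌊(p x).toReal⌋₊ + 1 ≤ k0 + 2*((⌊(p x).toReal⌋₊ - k0)/2) + 2 := by omega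
        have h2 : ((⌊(p x).toReal⌋₊ + 1 : ℕ):ℝ) ≤
            ((k0 + 2*((⌊(p x).toReal⌋₊ - k0)/2) + 2 : ℕ):ℝ) := by exact_mod_cast h1
        push_cast at h2
        linarith
    -- bound for each term of the series
    have hterm : ∀ j : ℕ, (∫⁻ x in S j, ENNReal.ofReal
        (((p x).toReal * Real.log (p x).toReal / D ^ α) ^ ((p x).toReal / α)))
        ≤ ENNReal.ofReal ((2:ℝ) ^ (-((k0:ℝ))/2 - 2) * (1/2)^j) := by
      intro j
      obtain ⟨e1, e2, e3, e4, e5, e6⟩ := hfacts ((k0:ℝ) + 2*(j:ℝ))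
        (le_add_of_nonneg_right (by positivity))
      have hk0' : (0:ℝ) < (k0:ℝ) + 2*(j:ℝ) := by linarith
      have hD0 : (0:ℝ) < D ^ α := Real.rpow_pos_of_pos (by linarith) α
      have hGbase0 : (0:ℝ) ≤ ((k0:ℝ) + 2*(j:ℝ) + 2) * Real.log ((k0:ℝ) + 2*(j:ℝ) + 2) / D ^ α := by
        apply div_nonneg ?_ hD0.le
        apply mul_nonneg (by linarith)
        apply Real.log_nonneg (by linarith)
      have hGb : ∀ x ∈ S j,
          ENNReal.ofReal (((p x).toReal * Real.log (p x).toReal / D ^ α) ^ ((p x).toReal / α))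
          ≤ ENNReal.ofReal ((((k0:ℝ) + 2*(j:ℝ) + 2) * Real.log ((k0:ℝ) + 2*(j:ℝ) + 2) / D ^ α)
              ^ (((k0:ℝ) + 2*(j:ℝ) + 2) / α)) := by
        intro x hx
        apply ENNReal.ofReal_le_ofReal
        obtain ⟨hxΩ', hx1, hx2⟩ := hx
        have hqk0 : (k0:ℝ) ≤ (p x).toReal :=
          le_trans (le_add_of_nonneg_right (by positivity)) hx1
        obtain ⟨f1, f2, f3, f4, f5, f6⟩ := hfacts _ hqk0
        have hq0 : (0:ℝ) < (p x).toReal := by linarith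
        have hbase1 : 1 ≤ (p x).toReal * Real.log (p x).toReal / D ^ α := (one_le_div hD0).2 f4
        have hstep1 : ((p x).toReal * Real.log (p x).toReal / D ^ α) ^ ((p x).toReal / α)
            ≤ ((p x).toReal * Real.log (p x).toReal / D ^ α) ^ (((k0:ℝ) + 2*(j:ℝ) + 2) / α) := by
          apply Real.rpow_le_rpow_of_exponent_le hbase1
          apply div_le_div_of_nonneg_right hx2.le hα.le
        have hstep2 : ((p x).toReal * Real.log (p x).toReal / D ^ α) ^ (((k0:ℝ) + 2*(j:ℝ) + 2) / α)
            ≤ (((k0:ℝ) + 2*(j:ℝ) + 2) * Real.log ((k0:ℝ) + 2*(j:ℝ) + 2) / D ^ α)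
              ^ (((k0:ℝ) + 2*(j:ℝ) + 2) / α) := by
          apply Real.rpow_le_rpow (le_trans zero_le_one hbase1) ?_ (by positivity)
          apply div_le_div_of_nonneg_right ?_ hD0.le
          have hlog : Real.log (p x).toReal ≤ Real.log ((k0:ℝ) + 2*(j:ℝ) + 2) :=
            Real.log_le_log hq0 hx2.le
          have hlogpos : 0 ≤ Real.log (p x).toReal := by linarith
          apply mul_le_mul hx2.le hlog hlogpos (by linarith)
        exact hstep1.trans hstep2
      have hmeasS : volume (S j) ≤ ENNReal.ofReal (C ^ ((k0:ℝ) + 2*(j:ℝ)) *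
          ((k0:ℝ) + 2*(j:ℝ)) ^ (-(((k0:ℝ) + 2*(j:ℝ))/α)) *
          Real.log ((k0:ℝ) + 2*(j:ℝ)) ^ (-(((k0:ℝ) + 2*(j:ℝ))/α))) := by
        refine (measure_mono ?_).trans (hlam0 _ e1)
        rintro x ⟨hxΩ', hx1, hx2⟩
        exact ⟨hxΩ'.1, ENNReal.ofReal_le_of_le_toReal hx1⟩
      calc (∫⁻ x in S j, ENNReal.ofReal
            (((p x).toReal * Real.log (p x).toReal / D ^ α) ^ ((p x).toReal / α)))
          ≤ ∫⁻ _ in S j, ENNReal.ofReal ((((k0:ℝ) + 2*(j:ℝ) + 2) *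
              Real.log ((k0:ℝ) + 2*(j:ℝ) + 2) / D ^ α) ^ (((k0:ℝ) + 2*(j:ℝ) + 2) / α)) :=
            setLIntegral_mono measurable_const hGb
        _ = ENNReal.ofReal ((((k0:ℝ) + 2*(j:ℝ) + 2) *
              Real.log ((k0:ℝ) + 2*(j:ℝ) + 2) / D ^ α) ^ (((k0:ℝ) + 2*(j:ℝ) + 2) / α)) *
              volume (S j) := setLIntegral_const _ _
        _ ≤ ENNReal.ofReal ((((k0:ℝ) + 2*(j:ℝ) + 2) *
              Real.log ((k0:ℝ) + 2*(j:ℝ) + 2) / D ^ α) ^ (((k0:ℝ) + 2*(j:ℝ) + 2) / α)) *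
              ENNReal.ofReal (C ^ ((k0:ℝ) + 2*(j:ℝ)) *
                ((k0:ℝ) + 2*(j:ℝ)) ^ (-(((k0:ℝ) + 2*(j:ℝ))/α)) *
                Real.log ((k0:ℝ) + 2*(j:ℝ)) ^ (-(((k0:ℝ) + 2*(j:ℝ))/α))) :=
            mul_le_mul_right hmeasS _
        _ = ENNReal.ofReal (((((k0:ℝ) + 2*(j:ℝ) + 2) *
              Real.log ((k0:ℝ) + 2*(j:ℝ) + 2) / D ^ α) ^ (((k0:ℝ) + 2*(j:ℝ) + 2) / α)) *
              (C ^ ((k0:ℝ) + 2*(j:ℝ)) *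
                ((k0:ℝ) + 2*(j:ℝ)) ^ (-(((k0:ℝ) + 2*(j:ℝ))/α)) *
                Real.log ((k0:ℝ) + 2*(j:ℝ)) ^ (-(((k0:ℝ) + 2*(j:ℝ))/α)))) :=
            (ENNReal.ofReal_mul (Real.rpow_nonneg hGbase0 _)).symm
        _ ≤ ENNReal.ofReal ((2:ℝ) ^ (-(((k0:ℝ) + 2*(j:ℝ))/2) - 2)) := by
            apply ENNReal.ofReal_le_ofReal
            rw [hD]
            exact aux_T hα hC1 e6 e2 e5
        _ = ENNReal.ofReal ((2:ℝ) ^ (-((k0:ℝ))/2 - 2) * (1/2)^j) := by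
            congr 1
            rw [show -(((k0:ℝ) + 2*(j:ℝ))/2) - 2 = (-((k0:ℝ))/2 - 2) + (-(j:ℝ)) by ring,
              Real.rpow_add (by norm_num : (0:ℝ) < 2),
              Real.rpow_neg (by norm_num : (0:ℝ) ≤ 2), Real.rpow_natCast]
            rw [one_div, inv_pow]
    -- sum the series
    have hseries : (∫⁻ x in {x | p x < ENNReal.ofReal ((k0:ℝ))}ᶜ ∩ (Ω ∩ {x | p x ≠ ∞}),
        ENNReal.ofReal (((p x).toReal * Real.log (p x).toReal / D ^ α) ^ ((p x).toReal / α)))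
        ≤ ENNReal.ofReal (1/4) := by
      have h1 : (∫⁻ x in {x | p x < ENNReal.ofReal ((k0:ℝ))}ᶜ ∩ (Ω ∩ {x | p x ≠ ∞}),
          ENNReal.ofReal (((p x).toReal * Real.log (p x).toReal / D ^ α) ^ ((p x).toReal / α)))
          ≤ ∑' j : ℕ, ∫⁻ x in S j, ENNReal.ofReal
            (((p x).toReal * Real.log (p x).toReal / D ^ α) ^ ((p x).toReal / α)) :=
        (lintegral_mono_set (μ := volume) hcover).trans (lintegral_iUnion_le S _)
      have h2 := ENNReal.tsum_le_tsum hterm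
      have h3 : ∑' j : ℕ, ENNReal.ofReal ((2:ℝ) ^ (-((k0:ℝ))/2 - 2) * (1/2)^j)
          = ENNReal.ofReal ((2:ℝ) ^ (-((k0:ℝ))/2 - 2)) * (1 - ENNReal.ofReal (1/2))⁻¹ := by
        have heq : ∀ j : ℕ, ENNReal.ofReal ((2:ℝ) ^ (-((k0:ℝ))/2 - 2) * (1/2)^j)
            = ENNReal.ofReal ((2:ℝ) ^ (-((k0:ℝ))/2 - 2)) * (ENNReal.ofReal (1/2))^j := by
          intro j
          rw [ENNReal.ofReal_mul (Real.rpow_nonneg (by norm_num) _),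
            ENNReal.ofReal_pow (by norm_num : (0:ℝ) ≤ 1/2)]
        simp_rw [heq]
        rw [ENNReal.tsum_mul_left, ENNReal.tsum_geometric]
      have h4 : (1 - ENNReal.ofReal (1/2 : ℝ))⁻¹ = 2 := by
        rw [show ENNReal.ofReal (1/2:ℝ) = 2⁻¹ by
          rw [one_div, ENNReal.ofReal_inv_of_pos (by norm_num : (0:ℝ) < 2)]
          norm_num]
        rw [ENNReal.one_sub_inv_two, inv_inv]
      have h5 : ENNReal.ofReal ((2:ℝ) ^ (-((k0:ℝ))/2 - 2)) * 2 ≤ ENNReal.ofReal (1/4) := by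
        rw [show (2:ℝ≥0∞) = ENNReal.ofReal (2:ℝ) by simp,
          ← ENNReal.ofReal_mul (Real.rpow_nonneg (by norm_num) _)]
        apply ENNReal.ofReal_le_ofReal
        have e1 : (2:ℝ) ^ (-((k0:ℝ))/2 - 2) * 2 = (2:ℝ) ^ ((-((k0:ℝ))/2 - 2) + 1) := by
          rw [Real.rpow_add (by norm_num : (0:ℝ) < 2), Real.rpow_one]
        rw [e1]
        have e2 : (2:ℝ) ^ ((-((k0:ℝ))/2 - 2) + 1) ≤ (2:ℝ) ^ (-(2:ℝ)) :=
          Real.rpow_le_rpow_of_exponent_le (by norm_num) (by linarith)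
        have e3 : (2:ℝ) ^ (-(2:ℝ)) = 1/4 := by
          rw [show (-(2:ℝ)) = ((-2 : ℤ):ℝ) by norm_num, Real.rpow_intCast]
          norm_num
        linarith
      calc (∫⁻ x in {x | p x < ENNReal.ofReal ((k0:ℝ))}ᶜ ∩ (Ω ∩ {x | p x ≠ ∞}),
          ENNReal.ofReal (((p x).toReal * Real.log (p x).toReal / D ^ α) ^ ((p x).toReal / α)))
          ≤ ∑' j : ℕ, (∫⁻ x in S j, ENNReal.ofReal
            (((p x).toReal * Real.log (p x).toReal / D ^ α) ^ ((p x).toReal / α))) := h1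
        _ ≤ ∑' j : ℕ, ENNReal.ofReal ((2:ℝ) ^ (-((k0:ℝ))/2 - 2) * (1/2)^j) := h2
        _ = ENNReal.ofReal ((2:ℝ) ^ (-((k0:ℝ))/2 - 2)) * (1 - ENNReal.ofReal (1/2))⁻¹ := h3
        _ = ENNReal.ofReal ((2:ℝ) ^ (-((k0:ℝ))/2 - 2)) * 2 := by rw [h4]
        _ ≤ ENNReal.ofReal (1/4) := h5
    -- total bound on the large-p part
    have hb2 : (∫⁻ x in {x | p x < ENNReal.ofReal ((k0:ℝ))}ᶜ ∩ (Ω ∩ {x | p x ≠ ∞}),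
        ENNReal.ofReal ((|f x| / (K * t)) ^ (p x).toReal))
        ≤ ENNReal.ofReal (1/4) + ENNReal.ofReal (1/4) := by
      calc (∫⁻ x in {x | p x < ENNReal.ofReal ((k0:ℝ))}ᶜ ∩ (Ω ∩ {x | p x ≠ ∞}),
            ENNReal.ofReal ((|f x| / (K * t)) ^ (p x).toReal))
          ≤ ∫⁻ x in {x | p x < ENNReal.ofReal ((k0:ℝ))}ᶜ ∩ (Ω ∩ {x | p x ≠ ∞}),
            (ENNReal.ofReal (((p x).toReal * Real.log (p x).toReal / D ^ α) ^ ((p x).toReal / α))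
              + ENNReal.ofReal (1/4) * ENNReal.ofReal (Real.exp ((|f x| / t) ^ α))) :=
            setLIntegral_mono (hgqmeas.add (measurable_const.mul hEmeas)) hb2a
        _ = (∫⁻ x in {x | p x < ENNReal.ofReal ((k0:ℝ))}ᶜ ∩ (Ω ∩ {x | p x ≠ ∞}),
            ENNReal.ofReal (((p x).toReal * Real.log (p x).toReal / D ^ α) ^ ((p x).toReal / α)))
            + ∫⁻ x in {x | p x < ENNReal.ofReal ((k0:ℝ))}ᶜ ∩ (Ω ∩ {x | p x ≠ ∞}),
              ENNReal.ofReal (1/4) * ENNReal.ofReal (Real.exp ((|f x| / t) ^ α)) :=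
            lintegral_add_left hgqmeas _
        _ ≤ ENNReal.ofReal (1/4) + ENNReal.ofReal (1/4) := by
            apply add_le_add hseries
            rw [lintegral_const_mul _ hEmeas]
            calc ENNReal.ofReal (1/4) * ∫⁻ x in {x | p x < ENNReal.ofReal ((k0:ℝ))}ᶜ ∩
                  (Ω ∩ {x | p x ≠ ∞}), ENNReal.ofReal (Real.exp ((|f x| / t) ^ α))
                ≤ ENNReal.ofReal (1/4) * 1 :=
                  mul_le_mul_right (hexpint _ (Set.inter_subset_right.trans hΩ'sub)) _
              _ = ENNReal.ofReal (1/4) := mul_one _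
    -- split and conclude the modular bound
    have hBm : MeasurableSet {x | p x < ENNReal.ofReal ((k0:ℝ))} := hpmeas measurableSet_Iio
    have hsplit : (∫⁻ x in Ω ∩ {x | p x ≠ ∞},
        ENNReal.ofReal ((|f x| / (K * t)) ^ (p x).toReal))
        = (∫⁻ x in {x | p x < ENNReal.ofReal ((k0:ℝ))} ∩ (Ω ∩ {x | p x ≠ ∞}),
            ENNReal.ofReal ((|f x| / (K * t)) ^ (p x).toReal)) +
          (∫⁻ x in {x | p x < ENNReal.ofReal ((k0:ℝ))}ᶜ ∩ (Ω ∩ {x | p x ≠ ∞}),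
            ENNReal.ofReal ((|f x| / (K * t)) ^ (p x).toReal)) := by
      rw [← Measure.restrict_restrict hBm, ← Measure.restrict_restrict hBm.compl,
        lintegral_add_compl _ hBm]
    have hmod : (∫⁻ x in Ω ∩ {x | p x ≠ ∞},
        ENNReal.ofReal ((|f x| / (K * t)) ^ (p x).toReal)) +
        essSup (fun x => ENNReal.ofReal (|f x| / (K * t)))
          (volume.restrict (Ω ∩ {x | p x = ∞})) ≤ 1 := by
      have hz : volume.restrict (Ω ∩ {x | p x = ∞}) = (0 : Measure (Fin n → ℝ)) :=
        Measure.restrict_eq_zero.2 hnull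
      rw [hz, essSup_measure_zero, bot_eq_zero, add_zero, hsplit]
      calc (∫⁻ x in {x | p x < ENNReal.ofReal ((k0:ℝ))} ∩ (Ω ∩ {x | p x ≠ ∞}),
            ENNReal.ofReal ((|f x| / (K * t)) ^ (p x).toReal)) +
          (∫⁻ x in {x | p x < ENNReal.ofReal ((k0:ℝ))}ᶜ ∩ (Ω ∩ {x | p x ≠ ∞}),
            ENNReal.ofReal ((|f x| / (K * t)) ^ (p x).toReal))
          ≤ ENNReal.ofReal (1/2) + (ENNReal.ofReal (1/4) + ENNReal.ofReal (1/4)) :=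
            add_le_add hb1 hb2
        _ = 1 := by
            rw [← ENNReal.ofReal_add (by norm_num) (by norm_num),
              ← ENNReal.ofReal_add (by norm_num) (by norm_num)]
            norm_num
    have hlux : luxNormE Ω p f ≤ ENNReal.ofReal (K * t) := by
      unfold luxNormE
      exact iInf_le_of_le (K * t) (iInf_le_of_le (mul_pos hK0 ht) (iInf_le_of_le hmod le_rfl))
    calc luxNormE Ω p f ≤ ENNReal.ofReal (K * t) := hlux
      _ = ENNReal.ofReal K * ENNReal.ofReal t := ENNReal.ofReal_mul hK0.le
  -- conclude
  have hc0 : (ENNReal.ofReal K) ≠ 0 := by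
    simp only [ne_eq, ENNReal.ofReal_eq_zero, not_le]
    linarith
  have hct : (ENNReal.ofReal K) ≠ ⊤ := ENNReal.ofReal_ne_top
  have hdivle : luxNormE Ω p f / ENNReal.ofReal K
      ≤ orliczNorm Ω (fun s => Real.exp (s ^ α)) f := by
    unfold orliczNorm
    refine le_iInf fun t => le_iInf fun ht => le_iInf fun hcond => ?_
    refine ENNReal.div_le_of_le_mul ?_
    calc luxNormE Ω p f ≤ ENNReal.ofReal K * ENNReal.ofReal t := key t ht hcond
      _ = ENNReal.ofReal t * ENNReal.ofReal K := mul_comm _ _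
  calc luxNormE Ω p f
      = ENNReal.ofReal K * (luxNormE Ω p f / ENNReal.ofReal K) :=
        (ENNReal.mul_div_cancel hc0 hct).symm
    _ ≤ ENNReal.ofReal K * orliczNorm Ω (fun s => Real.exp (s ^ α)) f :=
        mul_le_mul_right hdivle _
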